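/- The vector field a : ℝ² → ℝ² defined by a(p) = p / (1 + ‖p‖) is monotone: for all p, q ∈ ℝ², ⟨a(p) - a(q), p - q⟩ ≥ 0. -/

import Mathlib

noncomputable def fluxA (p : EuclideanSpace ℝ (Fin 2)) : EuclideanSpace ℝ (Fin 2) :=
  (1 + ‖p‖)⁻¹ • p

theorem flux_monotone (p q : EuclideanSpace ℝ (Fin 2)) :
    (0 : ℝ) ≤ inner ℝ (fluxA p - fluxA q) (p - q) := by
  unfold fluxA
  set a := ‖p‖ with ha
  set b := ‖q‖ with hb
  have ha0 : (0:ℝ) ≤ a := norm_nonneg p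
  have hb0 : (0:ℝ) ≤ b := norm_nonneg q
  have hpa : (0:ℝ) < 1 + a := by linarith
  have hpb : (0:ℝ) < 1 + b := by linarith
  have hs : (inner ℝ p q : ℝ) ≤ a * b := real_inner_le_norm p q
  have expand : (inner ℝ ((1+a)⁻¹ • p - (1+b)⁻¹ • q) (p - q) : ℝ)
      = (1+a)⁻¹ * (a^2 - inner ℝ p q) + (1+b)⁻¹ * (b^2 - inner ℝ p q) := by
    simp only [inner_sub_left, inner_sub_right, real_inner_smul_left,
      real_inner_self_eq_norm_sq, real_inner_comm q p]
    ring
  rw [expand]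
  set s : ℝ := inner ℝ p q with hsdef
  rw [inv_eq_one_div, inv_eq_one_div, div_mul_eq_mul_div, div_mul_eq_mul_div,
    div_add_div _ _ hpa.ne' hpb.ne']
  apply div_nonneg _ (by positivity)
  nlinarith [sq_nonneg (a - b)]
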